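/- For every n ≥ 1, ∑_{σ∈S_n(312)} q^{crs(σ)} = ∑_{j=0}^{n−1} (∑_{α∈S_j(231)} q^{crs(α)}) · (∑_{β∈S_{n−1−j}(312)} q^{crs(β)}), where the empty sum over S_0 equals 1. -/

import Mathlib

open Finset Polynomial Equiv

attribute [local instance] Classical.propDecidable

def isCrossing {n : ℕ} (σ : Equiv.Perm (Fin n)) (i j : Fin n) : Prop :=
  (i < j ∧ j < σ i ∧ σ i < σ j) ∨ (σ i < σ j ∧ σ j ≤ i ∧ i < j)

noncomputable def crs {n : ℕ} (σ : Equiv.Perm (Fin n)) : ℕ :=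
  (Finset.univ.filter (fun p : Fin n × Fin n => isCrossing σ p.1 p.2)).card

def avoids123 {n : ℕ} (σ : Equiv.Perm (Fin n)) : Prop :=
  ¬ ∃ i j k : Fin n, i < j ∧ j < k ∧ σ i < σ j ∧ σ j < σ k

def avoids132 {n : ℕ} (σ : Equiv.Perm (Fin n)) : Prop :=
  ¬ ∃ i j k : Fin n, i < j ∧ j < k ∧ σ i < σ k ∧ σ k < σ j

def avoids213 {n : ℕ} (σ : Equiv.Perm (Fin n)) : Prop :=
  ¬ ∃ i j k : Fin n, i < j ∧ j < k ∧ σ j < σ i ∧ σ i < σ k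

def avoids231 {n : ℕ} (σ : Equiv.Perm (Fin n)) : Prop :=
  ¬ ∃ i j k : Fin n, i < j ∧ j < k ∧ σ k < σ i ∧ σ i < σ j

def avoids312 {n : ℕ} (σ : Equiv.Perm (Fin n)) : Prop :=
  ¬ ∃ i j k : Fin n, i < j ∧ j < k ∧ σ j < σ k ∧ σ k < σ i

def avoids321 {n : ℕ} (σ : Equiv.Perm (Fin n)) : Prop :=
  ¬ ∃ i j k : Fin n, i < j ∧ j < k ∧ σ k < σ j ∧ σ j < σ i

noncomputable def ut {n : ℕ} (σ : Equiv.Perm (Fin n)) : ℕ :=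
  (Finset.univ.filter (fun i : Fin n => σ⁻¹ i < i ∧ i < σ i)).card

noncomputable def lt' {n : ℕ} (σ : Equiv.Perm (Fin n)) : ℕ :=
  (Finset.univ.filter (fun i : Fin n => σ i < i ∧ i < σ⁻¹ i)).card

section EmbDef

variable {n j : ℕ}

def embF (hj : j < n) (α : Perm (Fin j)) (β : Perm (Fin (n - 1 - j))) : Fin n → Fin n :=
  fun i =>
    if h1 : (i : ℕ) < j then
      ⟨j - ((α ⟨j - 1 - (i : ℕ), by omega⟩ : Fin j) : ℕ), by omega⟩
    else if h2 : (i : ℕ) = j then ⟨0, by omega⟩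
    else ⟨((β ⟨(i : ℕ) - j - 1, by have := i.isLt; omega⟩ : Fin (n - 1 - j)) : ℕ) + j + 1, by
      have := (β ⟨(i : ℕ) - j - 1, by have := i.isLt; omega⟩).isLt; omega⟩

variable (hj : j < n) (α : Perm (Fin j)) (β : Perm (Fin (n - 1 - j)))

lemma embF_lt (i : Fin n) (a : Fin j) (ha : (a : ℕ) = j - 1 - (i : ℕ)) (hi : (i : ℕ) < j) :
    ((embF hj α β i : Fin n) : ℕ) = j - ((α a : Fin j) : ℕ) := by
  have h : a = ⟨j - 1 - (i : ℕ), by omega⟩ := Fin.ext ha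
  rw [h]
  unfold embF
  rw [dif_pos hi]

lemma embF_eqj (i : Fin n) (hi : (i : ℕ) = j) : ((embF hj α β i : Fin n) : ℕ) = 0 := by
  unfold embF
  rw [dif_neg (by omega), dif_pos hi]

lemma embF_gt (i : Fin n) (b : Fin (n - 1 - j)) (hb : (b : ℕ) = (i : ℕ) - j - 1)
    (hi : j < (i : ℕ)) :
    ((embF hj α β i : Fin n) : ℕ) = ((β b : Fin (n - 1 - j)) : ℕ) + j + 1 := by
  have h : b = ⟨(i : ℕ) - j - 1, by have := i.isLt; omega⟩ := Fin.ext hb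
  rw [h]
  unfold embF
  rw [dif_neg (by omega), dif_neg (by omega)]

lemma embF_injective : Function.Injective (embF hj α β) := by
  intro x y h
  have hv : ((embF hj α β x : Fin n) : ℕ) = ((embF hj α β y : Fin n) : ℕ) := congrArg Fin.val h
  rcases Nat.lt_trichotomy (x : ℕ) j with hx | hx | hx <;>
    rcases Nat.lt_trichotomy (y : ℕ) j with hy | hy | hy
  · -- lt lt
    have hbx : j - 1 - (x : ℕ) < j := by omega
    have hby : j - 1 - (y : ℕ) < j := by omega
    have ex := embF_lt hj α β x ⟨j - 1 - (x : ℕ), hbx⟩ rfl hx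
    have ey := embF_lt hj α β y ⟨j - 1 - (y : ℕ), hby⟩ rfl hy
    have hax := (α ⟨j - 1 - (x : ℕ), hbx⟩).isLt
    have hay := (α ⟨j - 1 - (y : ℕ), hby⟩).isLt
    have hveq : ((α ⟨j - 1 - (x : ℕ), hbx⟩ : Fin j) : ℕ) = ((α ⟨j - 1 - (y : ℕ), hby⟩ : Fin j) : ℕ) := by
      omega
    have h2 := α.injective (Fin.val_injective hveq)
    simp only [Fin.mk.injEq] at h2
    exact Fin.ext (by omega)
  · -- lt eq
    exfalso
    have hbx : j - 1 - (x : ℕ) < j := by omega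
    have ex := embF_lt hj α β x ⟨j - 1 - (x : ℕ), hbx⟩ rfl hx
    have hax := (α ⟨j - 1 - (x : ℕ), hbx⟩).isLt
    have ey := embF_eqj hj α β y hy
    omega
  · -- lt gt
    exfalso
    have hbx : j - 1 - (x : ℕ) < j := by omega
    have ex := embF_lt hj α β x ⟨j - 1 - (x : ℕ), hbx⟩ rfl hx
    have hax := (α ⟨j - 1 - (x : ℕ), hbx⟩).isLt
    have hby : (y : ℕ) - j - 1 < n - 1 - j := by have := y.isLt; omega
    have ey := embF_gt hj α β y ⟨(y : ℕ) - j - 1, hby⟩ rfl hy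
    omega
  · -- eq lt
    exfalso
    have hby : j - 1 - (y : ℕ) < j := by omega
    have ey := embF_lt hj α β y ⟨j - 1 - (y : ℕ), hby⟩ rfl hy
    have hay := (α ⟨j - 1 - (y : ℕ), hby⟩).isLt
    have ex := embF_eqj hj α β x hx
    omega
  · exact Fin.ext (by omega)
  · -- eq gt
    exfalso
    have ex := embF_eqj hj α β x hx
    have hby : (y : ℕ) - j - 1 < n - 1 - j := by have := y.isLt; omega
    have ey := embF_gt hj α β y ⟨(y : ℕ) - j - 1, hby⟩ rfl hy
    omega
  · -- gt lt
    exfalso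
    have hby : j - 1 - (y : ℕ) < j := by omega
    have ey := embF_lt hj α β y ⟨j - 1 - (y : ℕ), hby⟩ rfl hy
    have hay := (α ⟨j - 1 - (y : ℕ), hby⟩).isLt
    have hbx : (x : ℕ) - j - 1 < n - 1 - j := by have := x.isLt; omega
    have ex := embF_gt hj α β x ⟨(x : ℕ) - j - 1, hbx⟩ rfl hx
    omega
  · -- gt eq
    exfalso
    have ey := embF_eqj hj α β y hy
    have hbx : (x : ℕ) - j - 1 < n - 1 - j := by have := x.isLt; omega
    have ex := embF_gt hj α β x ⟨(x : ℕ) - j - 1, hbx⟩ rfl hx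
    omega
  · -- gt gt
    have hbx : (x : ℕ) - j - 1 < n - 1 - j := by have := x.isLt; omega
    have hby : (y : ℕ) - j - 1 < n - 1 - j := by have := y.isLt; omega
    have ex := embF_gt hj α β x ⟨(x : ℕ) - j - 1, hbx⟩ rfl hx
    have ey := embF_gt hj α β y ⟨(y : ℕ) - j - 1, hby⟩ rfl hy
    have hveq : ((β ⟨(x : ℕ) - j - 1, hbx⟩ : Fin (n-1-j)) : ℕ) = ((β ⟨(y : ℕ) - j - 1, hby⟩ : Fin (n-1-j)) : ℕ) := by omega
    have h2 := β.injective (Fin.val_injective hveq)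
    simp only [Fin.mk.injEq] at h2
    exact Fin.ext (by omega)

noncomputable def emb : Perm (Fin n) :=
  Equiv.ofBijective (embF hj α β) (Finite.injective_iff_bijective.mp (embF_injective hj α β))

lemma emb_apply (i : Fin n) : emb hj α β i = embF hj α β i := rfl

lemma emb_lt (i : Fin n) (a : Fin j) (ha : (a : ℕ) = j - 1 - (i : ℕ)) (hi : (i : ℕ) < j) :
    ((emb hj α β i : Fin n) : ℕ) = j - ((α a : Fin j) : ℕ) := embF_lt hj α β i a ha hi

lemma emb_eqj (i : Fin n) (hi : (i : ℕ) = j) : ((emb hj α β i : Fin n) : ℕ) = 0 :=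
  embF_eqj hj α β i hi

lemma emb_gt (i : Fin n) (b : Fin (n - 1 - j)) (hb : (b : ℕ) = (i : ℕ) - j - 1)
    (hi : j < (i : ℕ)) :
    ((emb hj α β i : Fin n) : ℕ) = ((β b : Fin (n - 1 - j)) : ℕ) + j + 1 :=
  embF_gt hj α β i b hb hi

end EmbDef

section Cross

variable {n j : ℕ} (hj : j < n) (α : Perm (Fin j)) (β : Perm (Fin (n - 1 - j)))

lemma cross_emb_lt (p1 p2 : Fin n) (a b : Fin j) (e1 : (p1 : ℕ) = j - 1 - (b : ℕ))
    (e2 : (p2 : ℕ) = j - 1 - (a : ℕ)) :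
    isCrossing (emb hj α β) p1 p2 ↔ isCrossing α a b := by
  have hb := b.isLt
  have ha := a.isLt
  have hp1 : (p1 : ℕ) < j := by omega
  have hp2 : (p2 : ℕ) < j := by omega
  have v1 := emb_lt hj α β p1 b (by omega) hp1
  have v2 := emb_lt hj α β p2 a (by omega) hp2
  have hva := (α a).isLt
  have hvb := (α b).isLt
  simp only [isCrossing, Fin.lt_def, Fin.le_def]
  omega

lemma cross_emb_gt (p1 p2 : Fin n) (a b : Fin (n - 1 - j)) (e1 : (p1 : ℕ) = (a : ℕ) + j + 1)
    (e2 : (p2 : ℕ) = (b : ℕ) + j + 1) :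
    isCrossing (emb hj α β) p1 p2 ↔ isCrossing β a b := by
  have v1 := emb_gt hj α β p1 a (by omega) (by omega)
  have v2 := emb_gt hj α β p2 b (by omega) (by omega)
  have hva := (β a).isLt
  have hvb := (β b).isLt
  simp only [isCrossing, Fin.lt_def, Fin.le_def]
  omega

lemma posA (p1 p2 : Fin n) (h1 : (p1 : ℕ) < j) (hc : isCrossing (emb hj α β) p1 p2) :
    (p2 : ℕ) < j := by
  simp only [isCrossing, Fin.lt_def, Fin.le_def] at hc
  have hb1 : j - 1 - (p1 : ℕ) < j := by omega
  have v1 := emb_lt hj α β p1 ⟨j - 1 - (p1 : ℕ), hb1⟩ rfl h1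
  have hv1 := (α ⟨j - 1 - (p1 : ℕ), hb1⟩).isLt
  rcases Nat.lt_trichotomy (p2 : ℕ) j with h | h | h
  · exact h
  · exfalso
    have v2 := emb_eqj hj α β p2 h
    omega
  · exfalso
    have hb2 : (p2 : ℕ) - j - 1 < n - 1 - j := by have := p2.isLt; omega
    have v2 := emb_gt hj α β p2 ⟨(p2 : ℕ) - j - 1, hb2⟩ rfl h
    omega

lemma posB (p1 p2 : Fin n) (h1 : ¬ (p1 : ℕ) < j) (hc : isCrossing (emb hj α β) p1 p2) :
    j < (p1 : ℕ) ∧ j < (p2 : ℕ) := by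
  simp only [isCrossing, Fin.lt_def, Fin.le_def] at hc
  rcases Nat.lt_trichotomy (p1 : ℕ) j with h | h | h
  · exact absurd h h1
  · exfalso
    have v1 := emb_eqj hj α β p1 h
    have hp2 : j < (p2 : ℕ) := by omega
    have hb2 : (p2 : ℕ) - j - 1 < n - 1 - j := by have := p2.isLt; omega
    have v2 := emb_gt hj α β p2 ⟨(p2 : ℕ) - j - 1, hb2⟩ rfl hp2
    omega
  · exact ⟨h, by omega⟩

lemma crs_emb : crs (emb hj α β) = crs α + crs β := by
  classical
  have hsplit := Finset.card_filter_add_card_filter_not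
    (s := Finset.univ.filter fun p : Fin n × Fin n => isCrossing (emb hj α β) p.1 p.2)
    (p := fun p : Fin n × Fin n => (p.1 : ℕ) < j)
  unfold crs
  rw [← hsplit]
  congr 1
  · -- A part
    refine Finset.card_bij
      (fun q hq => ((⟨j - 1 - (q.2 : ℕ), by
          have h : (q.1 : ℕ) < j := (Finset.mem_filter.mp hq).2; omega⟩ : Fin j),
        (⟨j - 1 - (q.1 : ℕ), by
          have h : (q.1 : ℕ) < j := (Finset.mem_filter.mp hq).2; omega⟩ : Fin j))) ?_ ?_ ?_
    · intro q hq
      have h1 : (q.1 : ℕ) < j := (Finset.mem_filter.mp hq).2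
      have hc : isCrossing (emb hj α β) q.1 q.2 :=
        (Finset.mem_filter.mp (Finset.mem_filter.mp hq).1).2
      have h2 := posA hj α β q.1 q.2 h1 hc
      simp only [Finset.mem_filter, Finset.mem_univ, true_and]
      exact (cross_emb_lt hj α β q.1 q.2 _ _
        (by show (q.1 : ℕ) = j - 1 - (j - 1 - (q.1 : ℕ)); omega)
        (by show (q.2 : ℕ) = j - 1 - (j - 1 - (q.2 : ℕ)); omega)).mp hc
    · intro q hq q' hq' h
      have h1 : (q.1 : ℕ) < j := (Finset.mem_filter.mp hq).2
      have hc : isCrossing (emb hj α β) q.1 q.2 :=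
        (Finset.mem_filter.mp (Finset.mem_filter.mp hq).1).2
      have h2 := posA hj α β q.1 q.2 h1 hc
      have h1' : (q'.1 : ℕ) < j := (Finset.mem_filter.mp hq').2
      have hc' : isCrossing (emb hj α β) q'.1 q'.2 :=
        (Finset.mem_filter.mp (Finset.mem_filter.mp hq').1).2
      have h2' := posA hj α β q'.1 q'.2 h1' hc'
      simp only [Prod.mk.injEq, Fin.mk.injEq] at h
      exact Prod.ext (Fin.ext (by omega)) (Fin.ext (by omega))
    · intro q hq
      have hc : isCrossing α q.1 q.2 := (Finset.mem_filter.mp hq).2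
      have hb1 := q.1.isLt
      have hb2 := q.2.isLt
      have hj0 : 0 < j := by omega
      refine ⟨(⟨j - 1 - (q.2 : ℕ), by omega⟩, ⟨j - 1 - (q.1 : ℕ), by omega⟩), ?_, ?_⟩
      · have hcσ : isCrossing (emb hj α β) ⟨j - 1 - (q.2 : ℕ), by omega⟩ ⟨j - 1 - (q.1 : ℕ), by omega⟩ :=
          (cross_emb_lt hj α β _ _ q.1 q.2 rfl rfl).mpr hc
        simp only [Finset.mem_filter, Finset.mem_univ, true_and]
        exact ⟨hcσ, by omega⟩
      · refine Prod.ext (Fin.ext ?_) (Fin.ext ?_)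
        · show j - 1 - (j - 1 - (q.1 : ℕ)) = (q.1 : ℕ); omega
        · show j - 1 - (j - 1 - (q.2 : ℕ)) = (q.2 : ℕ); omega
  · -- B part
    refine Finset.card_bij
      (fun q hq => ((⟨(q.1 : ℕ) - j - 1, by
          have h1 : ¬ (q.1 : ℕ) < j := (Finset.mem_filter.mp hq).2
          have hc : isCrossing (emb hj α β) q.1 q.2 :=
            (Finset.mem_filter.mp (Finset.mem_filter.mp hq).1).2
          have := posB hj α β q.1 q.2 h1 hc
          have := q.1.isLt; omega⟩ : Fin (n - 1 - j)),
        (⟨(q.2 : ℕ) - j - 1, by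
          have h1 : ¬ (q.1 : ℕ) < j := (Finset.mem_filter.mp hq).2
          have hc : isCrossing (emb hj α β) q.1 q.2 :=
            (Finset.mem_filter.mp (Finset.mem_filter.mp hq).1).2
          have := posB hj α β q.1 q.2 h1 hc
          have := q.2.isLt; omega⟩ : Fin (n - 1 - j)))) ?_ ?_ ?_
    · intro q hq
      have h1 : ¬ (q.1 : ℕ) < j := (Finset.mem_filter.mp hq).2
      have hc : isCrossing (emb hj α β) q.1 q.2 :=
        (Finset.mem_filter.mp (Finset.mem_filter.mp hq).1).2
      have h2 := posB hj α β q.1 q.2 h1 hc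
      simp only [Finset.mem_filter, Finset.mem_univ, true_and]
      exact (cross_emb_gt hj α β q.1 q.2 _ _
        (by show (q.1 : ℕ) = ((q.1 : ℕ) - j - 1) + j + 1; omega)
        (by show (q.2 : ℕ) = ((q.2 : ℕ) - j - 1) + j + 1; omega)).mp hc
    · intro q hq q' hq' h
      have h1 : ¬ (q.1 : ℕ) < j := (Finset.mem_filter.mp hq).2
      have hc : isCrossing (emb hj α β) q.1 q.2 :=
        (Finset.mem_filter.mp (Finset.mem_filter.mp hq).1).2
      have h2 := posB hj α β q.1 q.2 h1 hc
      have h1' : ¬ (q'.1 : ℕ) < j := (Finset.mem_filter.mp hq').2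
      have hc' : isCrossing (emb hj α β) q'.1 q'.2 :=
        (Finset.mem_filter.mp (Finset.mem_filter.mp hq').1).2
      have h2' := posB hj α β q'.1 q'.2 h1' hc'
      simp only [Prod.mk.injEq, Fin.mk.injEq] at h
      exact Prod.ext (Fin.ext (by omega)) (Fin.ext (by omega))
    · intro q hq
      have hc : isCrossing β q.1 q.2 := (Finset.mem_filter.mp hq).2
      have hb1 := q.1.isLt
      have hb2 := q.2.isLt
      refine ⟨(⟨(q.1 : ℕ) + j + 1, by omega⟩, ⟨(q.2 : ℕ) + j + 1, by omega⟩), ?_, ?_⟩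
      · have hcσ : isCrossing (emb hj α β) ⟨(q.1 : ℕ) + j + 1, by omega⟩ ⟨(q.2 : ℕ) + j + 1, by omega⟩ :=
          (cross_emb_gt hj α β _ _ q.1 q.2 rfl rfl).mpr hc
        simp only [Finset.mem_filter, Finset.mem_univ, true_and]
        exact ⟨hcσ, by omega⟩
      · refine Prod.ext (Fin.ext ?_) (Fin.ext ?_)
        · show (q.1 : ℕ) + j + 1 - j - 1 = (q.1 : ℕ); omega
        · show (q.2 : ℕ) + j + 1 - j - 1 = (q.2 : ℕ); omega

end Cross

section Avoid

variable {n j : ℕ} (hj : j < n) (α : Perm (Fin j)) (β : Perm (Fin (n - 1 - j)))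

lemma emb_inv_zero (h0 : 0 < n) : (((emb hj α β)⁻¹ ⟨0, h0⟩ : Fin n) : ℕ) = j := by
  have h1 : emb hj α β ⟨j, hj⟩ = ⟨0, h0⟩ := Fin.ext (emb_eqj hj α β ⟨j, hj⟩ rfl)
  have h2 : (emb hj α β)⁻¹ ⟨0, h0⟩ = ⟨j, hj⟩ := by
    rw [← h1]; exact Equiv.Perm.inv_eq_iff_eq.mpr rfl
  rw [h2]

lemma emb_avoids (hα : avoids231 α) (hβ : avoids312 β) : avoids312 (emb hj α β) := by
  rintro ⟨x, y, z, hxy, hyz, h1, h2⟩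
  rw [Fin.lt_def] at hxy hyz h1 h2
  rcases Nat.lt_trichotomy (x : ℕ) j with hx | hx | hx
  · have hbx : j - 1 - (x : ℕ) < j := by omega
    have ex := emb_lt hj α β x ⟨j - 1 - (x : ℕ), hbx⟩ rfl hx
    have hax := (α ⟨j - 1 - (x : ℕ), hbx⟩).isLt
    have hz : (z : ℕ) < j := by
      rcases Nat.lt_trichotomy (z : ℕ) j with h | h | h
      · exact h
      · exfalso; have ez := emb_eqj hj α β z h; omega
      · exfalso
        have hbz : (z : ℕ) - j - 1 < n - 1 - j := by have := z.isLt; omega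
        have ez := emb_gt hj α β z ⟨(z : ℕ) - j - 1, hbz⟩ rfl h
        omega
    have hy : (y : ℕ) < j := by omega
    have hbz : j - 1 - (z : ℕ) < j := by omega
    have hby : j - 1 - (y : ℕ) < j := by omega
    have ez := emb_lt hj α β z ⟨j - 1 - (z : ℕ), hbz⟩ rfl hz
    have ey := emb_lt hj α β y ⟨j - 1 - (y : ℕ), hby⟩ rfl hy
    have haz := (α ⟨j - 1 - (z : ℕ), hbz⟩).isLt
    have hay := (α ⟨j - 1 - (y : ℕ), hby⟩).isLt
    apply hα
    refine ⟨⟨j - 1 - (z : ℕ), hbz⟩, ⟨j - 1 - (y : ℕ), hby⟩, ⟨j - 1 - (x : ℕ), hbx⟩, ?_, ?_, ?_, ?_⟩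
    · rw [Fin.mk_lt_mk]; omega
    · rw [Fin.mk_lt_mk]; omega
    · rw [Fin.lt_def]; omega
    · rw [Fin.lt_def]; omega
  · exfalso
    have ex := emb_eqj hj α β x hx
    have hz : j < (z : ℕ) := by omega
    have hbz : (z : ℕ) - j - 1 < n - 1 - j := by have := z.isLt; omega
    have ez := emb_gt hj α β z ⟨(z : ℕ) - j - 1, hbz⟩ rfl hz
    omega
  · have hy : j < (y : ℕ) := by omega
    have hz : j < (z : ℕ) := by omega
    have hbx : (x : ℕ) - j - 1 < n - 1 - j := by have := x.isLt; omega
    have hby : (y : ℕ) - j - 1 < n - 1 - j := by have := y.isLt; omega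
    have hbz : (z : ℕ) - j - 1 < n - 1 - j := by have := z.isLt; omega
    have ex := emb_gt hj α β x ⟨(x : ℕ) - j - 1, hbx⟩ rfl hx
    have ey := emb_gt hj α β y ⟨(y : ℕ) - j - 1, hby⟩ rfl hy
    have ez := emb_gt hj α β z ⟨(z : ℕ) - j - 1, hbz⟩ rfl hz
    apply hβ
    refine ⟨⟨(x : ℕ) - j - 1, hbx⟩, ⟨(y : ℕ) - j - 1, hby⟩, ⟨(z : ℕ) - j - 1, hbz⟩, ?_, ?_, ?_, ?_⟩
    · rw [Fin.mk_lt_mk]; omega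
    · rw [Fin.mk_lt_mk]; omega
    · rw [Fin.lt_def]; omega
    · rw [Fin.lt_def]; omega

end Avoid

section Blocks

variable {n j : ℕ}

lemma card_val_le (hj : j < n) :
    (Finset.univ.filter fun v : Fin n => (v : ℕ) ≤ j).card = j + 1 := by
  classical
  rw [← Finset.card_range (j + 1)]
  apply Finset.card_nbij (i := fun v : Fin n => (v : ℕ))
  · intro a ha
    simp only [Finset.mem_coe, Finset.mem_filter, Finset.mem_univ, true_and] at ha
    simp only [Finset.mem_coe, Finset.mem_range]
    omega
  · intro a _ b _ hab
    exact Fin.ext hab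
  · intro b hb
    simp only [Finset.coe_range, Set.mem_Iio] at hb
    refine ⟨⟨b, by omega⟩, ?_, rfl⟩
    simp only [Finset.coe_filter, Finset.mem_univ, true_and, Set.mem_setOf_eq]
    omega

lemma card_pre (σ : Perm (Fin n)) (hj : j < n) :
    (Finset.univ.filter fun k : Fin n => ((σ k : Fin n) : ℕ) ≤ j).card = j + 1 := by
  classical
  rw [← card_val_le hj]
  apply Finset.card_nbij (i := fun k => σ k)
  · intro a ha
    simp only [Finset.mem_coe, Finset.mem_filter, Finset.mem_univ, true_and] at ha ⊢
    exact ha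
  · intro a _ b _ hab
    exact σ.injective hab
  · intro v hv
    simp only [Finset.coe_filter, Finset.mem_univ, true_and, Set.mem_setOf_eq] at hv
    refine ⟨σ⁻¹ v, ?_, (Equiv.eq_symm_apply σ).mp rfl⟩
    simp only [Finset.coe_filter, Finset.mem_univ, true_and, Set.mem_setOf_eq]
    rw [show σ (σ⁻¹ v) = v from (Equiv.eq_symm_apply σ).mp rfl]
    exact hv

lemma block_lt (σ : Perm (Fin n)) (hj : j < n) (h312 : avoids312 σ)
    (hσj : ((σ ⟨j, hj⟩ : Fin n) : ℕ) = 0) :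
    ∀ i : Fin n, (i : ℕ) < j → 1 ≤ ((σ i : Fin n) : ℕ) ∧ ((σ i : Fin n) : ℕ) ≤ j := by
  intro i hi
  have hne : 1 ≤ ((σ i : Fin n) : ℕ) := by
    by_contra h
    push_neg at h
    have h0 : ((σ i : Fin n) : ℕ) = 0 := by omega
    have h2 : σ i = σ ⟨j, hj⟩ := Fin.ext (by omega)
    have h3 := σ.injective h2
    have h4 : (i : ℕ) = j := by rw [h3]
    omega
  refine ⟨hne, ?_⟩
  by_contra hgt
  push_neg at hgt
  have hex : ∃ k : Fin n, j < (k : ℕ) ∧ 1 ≤ ((σ k : Fin n) : ℕ) ∧ ((σ k : Fin n) : ℕ) ≤ j := by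
    by_contra hno
    push_neg at hno
    have hsub : (Finset.univ.filter fun k : Fin n => ((σ k : Fin n) : ℕ) ≤ j) ⊆
        ((Finset.univ.filter fun v : Fin n => (v : ℕ) ≤ j).erase i) := by
      intro k hk
      simp only [Finset.mem_filter, Finset.mem_univ, true_and] at hk
      rw [Finset.mem_erase]
      constructor
      · rintro rfl; omega
      · simp only [Finset.mem_filter, Finset.mem_univ, true_and]
        by_contra hkj
        push_neg at hkj
        have h1 : 1 ≤ ((σ k : Fin n) : ℕ) := by
          by_contra hz
          push_neg at hz
          have h2 : σ k = σ ⟨j, hj⟩ := Fin.ext (by omega)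
          have h3 := σ.injective h2
          have h4 : (k : ℕ) = j := by rw [h3]
          omega
        exact absurd hk (by have := hno k (by omega) h1; omega)
    have hc1 := Finset.card_le_card hsub
    have hc2 : ((Finset.univ.filter fun v : Fin n => (v : ℕ) ≤ j).erase i).card = j := by
      rw [Finset.card_erase_of_mem (by simp only [Finset.mem_filter, Finset.mem_univ, true_and]; omega),
        card_val_le hj]
      omega
    rw [card_pre σ hj, hc2] at hc1
    omega
  obtain ⟨k, hk1, hk2, hk3⟩ := hex
  exact h312 ⟨i, ⟨j, hj⟩, k, by rw [Fin.lt_def]; exact hi, by rw [Fin.lt_def]; exact hk1,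
    by rw [Fin.lt_def]; omega, by rw [Fin.lt_def]; omega⟩

lemma block_gt (σ : Perm (Fin n)) (hj : j < n) (h312 : avoids312 σ)
    (hσj : ((σ ⟨j, hj⟩ : Fin n) : ℕ) = 0) :
    ∀ k : Fin n, j < (k : ℕ) → j < ((σ k : Fin n) : ℕ) := by
  intro k hk
  by_contra hle
  push_neg at hle
  have himg : Finset.image σ (Finset.univ.filter fun i : Fin n => (i : ℕ) ≤ j) =
      Finset.univ.filter fun v : Fin n => (v : ℕ) ≤ j := by
    apply Finset.eq_of_subset_of_card_le
    · intro v hv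
      simp only [Finset.mem_image] at hv
      obtain ⟨i, hi, rfl⟩ := hv
      simp only [Finset.mem_filter, Finset.mem_univ, true_and] at hi ⊢
      rcases Nat.lt_or_ge (i : ℕ) j with h | h
      · exact (block_lt σ hj h312 hσj i h).2
      · have : (i : ℕ) = j := by omega
        have : i = ⟨j, hj⟩ := Fin.ext this
        rw [this, hσj]
        omega
    · rw [Finset.card_image_of_injective _ σ.injective, card_val_le hj]
  have hmem : σ k ∈ Finset.univ.filter fun v : Fin n => (v : ℕ) ≤ j := by
    simp only [Finset.mem_filter, Finset.mem_univ, true_and]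
    exact hle
  rw [← himg, Finset.mem_image] at hmem
  obtain ⟨i, hi, he⟩ := hmem
  have := σ.injective he
  subst this
  simp only [Finset.mem_filter, Finset.mem_univ, true_and] at hi
  omega

end Blocks

section Extract

variable {n j : ℕ} (σ : Perm (Fin n)) (hj : j < n)

noncomputable def extA
    (hA : ∀ i : Fin n, (i : ℕ) < j → 1 ≤ ((σ i : Fin n) : ℕ) ∧ ((σ i : Fin n) : ℕ) ≤ j) :
    Perm (Fin j) :=
  Equiv.ofBijective
    (fun a : Fin j =>
      (⟨j - ((σ ⟨j - 1 - (a : ℕ), by omega⟩ : Fin n) : ℕ), by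
        have ha := a.isLt
        have := hA ⟨j - 1 - (a : ℕ), by omega⟩ (by show j - 1 - (a : ℕ) < j; omega)
        omega⟩ : Fin j))
    (Finite.injective_iff_bijective.mp (by
      intro a b hab
      have ha := a.isLt
      have hb := b.isLt
      have hva := hA ⟨j - 1 - (a : ℕ), by omega⟩ (by show j - 1 - (a : ℕ) < j; omega)
      have hvb := hA ⟨j - 1 - (b : ℕ), by omega⟩ (by show j - 1 - (b : ℕ) < j; omega)
      simp only [Fin.mk.injEq] at hab
      have hve : ((σ ⟨j - 1 - (a : ℕ), by omega⟩ : Fin n) : ℕ) =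
          ((σ ⟨j - 1 - (b : ℕ), by omega⟩ : Fin n) : ℕ) := by omega
      have h2 := σ.injective (Fin.val_injective hve)
      simp only [Fin.mk.injEq] at h2
      exact Fin.ext (by omega)))

noncomputable def extB
    (hB : ∀ i : Fin n, j < (i : ℕ) → j < ((σ i : Fin n) : ℕ)) :
    Perm (Fin (n - 1 - j)) :=
  Equiv.ofBijective
    (fun b : Fin (n - 1 - j) =>
      (⟨((σ ⟨(b : ℕ) + j + 1, by have := b.isLt; omega⟩ : Fin n) : ℕ) - j - 1, by
        have hb := b.isLt
        have := hB ⟨(b : ℕ) + j + 1, by omega⟩ (by show j < (b : ℕ) + j + 1; omega)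
        have := (σ ⟨(b : ℕ) + j + 1, by omega⟩).isLt
        omega⟩ : Fin (n - 1 - j)))
    (Finite.injective_iff_bijective.mp (by
      intro a b hab
      have ha := a.isLt
      have hb := b.isLt
      have hva := hB ⟨(a : ℕ) + j + 1, by omega⟩ (by show j < (a : ℕ) + j + 1; omega)
      have hvb := hB ⟨(b : ℕ) + j + 1, by omega⟩ (by show j < (b : ℕ) + j + 1; omega)
      simp only [Fin.mk.injEq] at hab
      have hve : ((σ ⟨(a : ℕ) + j + 1, by omega⟩ : Fin n) : ℕ) =
          ((σ ⟨(b : ℕ) + j + 1, by omega⟩ : Fin n) : ℕ) := by omega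
      have h2 := σ.injective (Fin.val_injective hve)
      simp only [Fin.mk.injEq] at h2
      exact Fin.ext (by omega)))

variable (hA : ∀ i : Fin n, (i : ℕ) < j → 1 ≤ ((σ i : Fin n) : ℕ) ∧ ((σ i : Fin n) : ℕ) ≤ j)
variable (hB : ∀ i : Fin n, j < (i : ℕ) → j < ((σ i : Fin n) : ℕ))

lemma extA_val (a : Fin j) (i : Fin n) (hi : (i : ℕ) = j - 1 - (a : ℕ)) :
    ((extA σ hj hA a : Fin j) : ℕ) = j - ((σ i : Fin n) : ℕ) := by
  have ha := a.isLt
  have h : i = ⟨j - 1 - (a : ℕ), by omega⟩ := Fin.ext hi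
  rw [h]
  rfl

lemma extB_val (b : Fin (n - 1 - j)) (i : Fin n) (hi : (i : ℕ) = (b : ℕ) + j + 1) :
    ((extB σ hj hB b : Fin (n - 1 - j)) : ℕ) = ((σ i : Fin n) : ℕ) - j - 1 := by
  have hb := b.isLt
  have h : i = ⟨(b : ℕ) + j + 1, by omega⟩ := Fin.ext hi
  rw [h]
  rfl

lemma extA_avoids (h312 : avoids312 σ) : avoids231 (extA σ hj hA) := by
  rintro ⟨x, y, z, hxy, hyz, h1, h2⟩
  rw [Fin.lt_def] at hxy hyz h1 h2
  have hx := x.isLt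
  have hy := y.isLt
  have hz := z.isLt
  have hbx : j - 1 - (x : ℕ) < n := by omega
  have hby : j - 1 - (y : ℕ) < n := by omega
  have hbz : j - 1 - (z : ℕ) < n := by omega
  have ex := extA_val σ hj hA x ⟨j - 1 - (x : ℕ), hbx⟩ rfl
  have ey := extA_val σ hj hA y ⟨j - 1 - (y : ℕ), hby⟩ rfl
  have ez := extA_val σ hj hA z ⟨j - 1 - (z : ℕ), hbz⟩ rfl
  have hvx := hA ⟨j - 1 - (x : ℕ), hbx⟩ (by show j - 1 - (x : ℕ) < j; omega)
  have hvy := hA ⟨j - 1 - (y : ℕ), hby⟩ (by show j - 1 - (y : ℕ) < j; omega)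
  have hvz := hA ⟨j - 1 - (z : ℕ), hbz⟩ (by show j - 1 - (z : ℕ) < j; omega)
  apply h312
  refine ⟨⟨j - 1 - (z : ℕ), hbz⟩, ⟨j - 1 - (y : ℕ), hby⟩, ⟨j - 1 - (x : ℕ), hbx⟩, ?_, ?_, ?_, ?_⟩
  · rw [Fin.mk_lt_mk]; omega
  · rw [Fin.mk_lt_mk]; omega
  · rw [Fin.lt_def]; omega
  · rw [Fin.lt_def]; omega

lemma extB_avoids (h312 : avoids312 σ) : avoids312 (extB σ hj hB) := by
  rintro ⟨x, y, z, hxy, hyz, h1, h2⟩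
  rw [Fin.lt_def] at hxy hyz h1 h2
  have hx := x.isLt
  have hy := y.isLt
  have hz := z.isLt
  have hbx : (x : ℕ) + j + 1 < n := by omega
  have hby : (y : ℕ) + j + 1 < n := by omega
  have hbz : (z : ℕ) + j + 1 < n := by omega
  have ex := extB_val σ hj hB x ⟨(x : ℕ) + j + 1, hbx⟩ rfl
  have ey := extB_val σ hj hB y ⟨(y : ℕ) + j + 1, hby⟩ rfl
  have ez := extB_val σ hj hB z ⟨(z : ℕ) + j + 1, hbz⟩ rfl
  have hvx := hB ⟨(x : ℕ) + j + 1, hbx⟩ (by show j < (x : ℕ) + j + 1; omega)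
  have hvy := hB ⟨(y : ℕ) + j + 1, hby⟩ (by show j < (y : ℕ) + j + 1; omega)
  have hvz := hB ⟨(z : ℕ) + j + 1, hbz⟩ (by show j < (z : ℕ) + j + 1; omega)
  apply h312
  refine ⟨⟨(x : ℕ) + j + 1, hbx⟩, ⟨(y : ℕ) + j + 1, hby⟩, ⟨(z : ℕ) + j + 1, hbz⟩, ?_, ?_, ?_, ?_⟩
  · rw [Fin.mk_lt_mk]; omega
  · rw [Fin.mk_lt_mk]; omega
  · rw [Fin.lt_def]; omega
  · rw [Fin.lt_def]; omega

lemma ext_emb_eq (hσj : ((σ ⟨j, hj⟩ : Fin n) : ℕ) = 0) :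
    emb hj (extA σ hj hA) (extB σ hj hB) = σ := by
  apply Equiv.ext
  intro i
  refine Fin.ext ?_
  rcases Nat.lt_trichotomy (i : ℕ) j with h | h | h
  · have hb : j - 1 - (i : ℕ) < j := by omega
    have e1 := emb_lt hj (extA σ hj hA) (extB σ hj hB) i ⟨j - 1 - (i : ℕ), hb⟩ rfl h
    have e2 := extA_val σ hj hA ⟨j - 1 - (i : ℕ), hb⟩ i (by show (i : ℕ) = j - 1 - (j - 1 - (i : ℕ)); omega)
    have hbd := hA i h
    omega
  · have e1 := emb_eqj hj (extA σ hj hA) (extB σ hj hB) i h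
    have h2 : i = ⟨j, hj⟩ := Fin.ext h
    rw [h2] at e1 ⊢
    omega
  · have hb : (i : ℕ) - j - 1 < n - 1 - j := by have := i.isLt; omega
    have e1 := emb_gt hj (extA σ hj hA) (extB σ hj hB) i ⟨(i : ℕ) - j - 1, hb⟩ rfl h
    have e2 := extB_val σ hj hB ⟨(i : ℕ) - j - 1, hb⟩ i (by show (i : ℕ) = ((i : ℕ) - j - 1) + j + 1; omega)
    have hbd := hB i h
    omega

end Extract

theorem sum_312_recurrence (n : ℕ) (hn : 1 ≤ n) :
    ∑ σ ∈ Finset.univ.filter (fun σ : Equiv.Perm (Fin n) => avoids312 σ),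
        (Polynomial.X : Polynomial ℤ) ^ crs σ =
      ∑ j ∈ Finset.range n,
        (∑ α ∈ Finset.univ.filter (fun α : Equiv.Perm (Fin j) => avoids231 α),
            (Polynomial.X : Polynomial ℤ) ^ crs α) *
          (∑ β ∈ Finset.univ.filter (fun β : Equiv.Perm (Fin (n - 1 - j)) => avoids312 β),
            (Polynomial.X : Polynomial ℤ) ^ crs β) := by
  classical
  have h0 : 0 < n := hn
  rw [← Finset.sum_fiberwise_of_maps_to
      (g := fun σ : Equiv.Perm (Fin n) => (((σ⁻¹ ⟨0, h0⟩ : Fin n)) : ℕ))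
      (t := Finset.range n) (fun σ _ => Finset.mem_range.mpr (Fin.isLt _))
      (fun σ => (Polynomial.X : Polynomial ℤ) ^ crs σ)]
  refine Finset.sum_congr rfl fun j hjm => ?_
  have hj : j < n := Finset.mem_range.mp hjm
  rw [Finset.sum_mul_sum, ← Finset.sum_product']
  refine (Finset.sum_bij (fun p _ => emb hj p.1 p.2) ?_ ?_ ?_ ?_).symm
  · -- membership
    rintro ⟨α, β⟩ hp
    rw [Finset.mem_product] at hp
    obtain ⟨hα, hβ⟩ := hp
    rw [Finset.mem_filter] at hα hβ
    simp only [Finset.mem_filter, Finset.mem_univ, true_and]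
    exact ⟨emb_avoids hj α β hα.2 hβ.2, emb_inv_zero hj α β h0⟩
  · -- injectivity
    rintro ⟨α, β⟩ _ ⟨α', β'⟩ _ h
    have hαeq : α = α' := by
      apply Equiv.ext
      intro a
      have ha := a.isLt
      have hb : j - 1 - (a : ℕ) < n := by omega
      have e1 := emb_lt hj α β ⟨j - 1 - (a : ℕ), hb⟩ a
        (by show (a : ℕ) = j - 1 - (j - 1 - (a : ℕ)); omega) (by show j - 1 - (a : ℕ) < j; omega)
      have e2 := emb_lt hj α' β' ⟨j - 1 - (a : ℕ), hb⟩ a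
        (by show (a : ℕ) = j - 1 - (j - 1 - (a : ℕ)); omega) (by show j - 1 - (a : ℕ) < j; omega)
      have hx := congrArg (fun f : Equiv.Perm (Fin n) => ((f ⟨j - 1 - (a : ℕ), hb⟩ : Fin n) : ℕ)) h
      simp only [] at hx
      have hva := (α a).isLt
      have hva' := (α' a).isLt
      exact Fin.ext (by omega)
    have hβeq : β = β' := by
      apply Equiv.ext
      intro b
      have hbb := b.isLt
      have hb : (b : ℕ) + j + 1 < n := by omega
      have e1 := emb_gt hj α β ⟨(b : ℕ) + j + 1, hb⟩ b
        (by show (b : ℕ) = ((b : ℕ) + j + 1) - j - 1; omega) (by show j < (b : ℕ) + j + 1; omega)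
      have e2 := emb_gt hj α' β' ⟨(b : ℕ) + j + 1, hb⟩ b
        (by show (b : ℕ) = ((b : ℕ) + j + 1) - j - 1; omega) (by show j < (b : ℕ) + j + 1; omega)
      have hx := congrArg (fun f : Equiv.Perm (Fin n) => ((f ⟨(b : ℕ) + j + 1, hb⟩ : Fin n) : ℕ)) h
      simp only [] at hx
      exact Fin.ext (by omega)
    exact Prod.ext hαeq hβeq
  · -- surjectivity
    intro σ hσm
    simp only [Finset.mem_filter, Finset.mem_univ, true_and] at hσm
    obtain ⟨h312, hfib⟩ := hσm
    have hσj : ((σ ⟨j, hj⟩ : Fin n) : ℕ) = 0 := by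
      have h1 : σ⁻¹ ⟨0, h0⟩ = ⟨j, hj⟩ := Fin.ext hfib
      have h2 := congrArg σ h1
      rw [show σ (σ⁻¹ ⟨0, h0⟩) = ⟨0, h0⟩ from (Equiv.eq_symm_apply σ).mp rfl] at h2
      rw [← h2]
    have hA := block_lt σ hj h312 hσj
    have hB := block_gt σ hj h312 hσj
    refine ⟨(extA σ hj hA, extB σ hj hB), ?_, ?_⟩
    · rw [Finset.mem_product]
      constructor <;> simp only [Finset.mem_filter, Finset.mem_univ, true_and]
      · exact extA_avoids σ hj hA h312
      · exact extB_avoids σ hj hB h312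
    · exact ext_emb_eq σ hj hA hB hσj
  · -- values
    rintro ⟨α, β⟩ _
    rw [crs_emb hj α β, pow_add]
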